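/- Total variation contraction from minorization: if a Markov kernel P on (X,𝒳) and a probability measure π satisfy P(x, A) ≥ ε·π(A) for all x and A, with ε ∈ (0,1], and π is P-invariant, then for every x and k ≥ 0, the total variation distance between Pᵏ(x,·) and π is at most (1 − ε)ᵏ. -/

import Mathlib

open MeasureTheory ProbabilityTheory

lemma tv_aux_prob
    {X : Type*} [MeasurableSpace X] (P : Kernel X X) [IsMarkovKernel P]
    (x : X) : ∀ k, IsProbabilityMeasure
      (((fun μ : Measure X => μ.bind (fun z => P z))^[k] (Measure.dirac x))) := by
  intro k
  induction k with
  | zero => simpa using (inferInstance : IsProbabilityMeasure (Measure.dirac x))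
  | succ n ih =>
    rw [Function.iterate_succ_apply']
    set μ := ((fun μ : Measure X => μ.bind (fun z => P z))^[n] (Measure.dirac x))
    constructor
    rw [Measure.bind_apply MeasurableSet.univ (Kernel.measurable P).aemeasurable]
    simp [ih.measure_univ]

lemma tv_aux_dom
    {X : Type*} [MeasurableSpace X] (P : Kernel X X) [IsMarkovKernel P]
    (π : Measure X) [IsProbabilityMeasure π]
    (ε : ℝ) (hε0 : 0 < ε) (hε1 : ε ≤ 1)
    (hminor : ∀ x A, MeasurableSet A → ENNReal.ofReal ε * π A ≤ P x A)
    (hinv : π.bind (fun x => P x) = π)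
    (x : X) : ∀ k A, MeasurableSet A →
      ENNReal.ofReal (1 - (1 - ε) ^ k) * π A ≤
        ((fun μ : Measure X => μ.bind (fun z => P z))^[k] (Measure.dirac x)) A := by
  have ht0 : ∀ k : ℕ, (0:ℝ) ≤ (1 - ε) ^ k := fun k => pow_nonneg (by linarith) k
  have ht1 : ∀ k : ℕ, (1 - ε) ^ k ≤ 1 := fun k =>
    pow_le_one₀ (by linarith) (by linarith)
  intro k
  induction k with
  | zero => intro A hA; simp
  | succ n ih =>
    intro A hA
    rw [Function.iterate_succ_apply']
    set μ := ((fun μ : Measure X => μ.bind (fun z => P z))^[n] (Measure.dirac x)) with hμ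
    have hprob : IsProbabilityMeasure μ := tv_aux_prob P x n
    set δ : ℝ := 1 - (1 - ε) ^ n with hδ
    have hδ0 : 0 ≤ δ := by have := ht1 n; linarith
    have hδ1 : δ ≤ 1 := by have := ht0 n; linarith
    haveI : IsFiniteMeasure ((ENNReal.ofReal δ) • π) := π.smul_finite ENNReal.ofReal_ne_top
    have hle : (ENNReal.ofReal δ) • π ≤ μ := by
      rw [Measure.le_iff]
      intro s hs
      simpa [Measure.smul_apply, smul_eq_mul] using ih s hs
    have hsplit : μ = (μ - (ENNReal.ofReal δ) • π) + (ENNReal.ofReal δ) • π :=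
      (Measure.sub_add_cancel_of_le hle).symm
    set ν : Measure X := μ - (ENNReal.ofReal δ) • π with hν
    have hπA : ∫⁻ z, P z A ∂π = π A := by
      conv_rhs => rw [← hinv]
      rw [Measure.bind_apply hA (Kernel.measurable P).aemeasurable]
    have hνuniv : ν Set.univ = ENNReal.ofReal (1 - δ) := by
      rw [hν, Measure.sub_apply MeasurableSet.univ hle]
      simp [hprob.measure_univ, Measure.smul_apply, smul_eq_mul,
        ENNReal.ofReal_sub 1 hδ0, ENNReal.ofReal_one]
    have hbind : (μ.bind (fun z => P z)) A
        = ∫⁻ z, P z A ∂ν + ENNReal.ofReal δ * ∫⁻ z, P z A ∂π := by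
      rw [Measure.bind_apply hA (Kernel.measurable P).aemeasurable]
      conv_lhs => rw [hsplit]
      rw [lintegral_add_measure, lintegral_smul_measure, smul_eq_mul]
    have hνlb : ENNReal.ofReal ε * π A * ENNReal.ofReal (1 - δ) ≤ ∫⁻ z, P z A ∂ν := by
      calc ENNReal.ofReal ε * π A * ENNReal.ofReal (1 - δ)
          = ∫⁻ _, ENNReal.ofReal ε * π A ∂ν := by
            rw [lintegral_const, hνuniv]
        _ ≤ ∫⁻ z, P z A ∂ν := lintegral_mono fun z => hminor z A hA
    have hcoef : ENNReal.ofReal (1 - (1 - ε) ^ (n + 1))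
        = ENNReal.ofReal ε * ENNReal.ofReal (1 - δ) + ENNReal.ofReal δ := by
      rw [← ENNReal.ofReal_mul hε0.le, ← ENNReal.ofReal_add (by nlinarith) hδ0]
      congr 1
      rw [hδ, pow_succ]; ring
    calc ENNReal.ofReal (1 - (1 - ε) ^ (n + 1)) * π A
        = ENNReal.ofReal ε * π A * ENNReal.ofReal (1 - δ)
          + ENNReal.ofReal δ * π A := by rw [hcoef]; ring
      _ ≤ ∫⁻ z, P z A ∂ν + ENNReal.ofReal δ * ∫⁻ z, P z A ∂π := by
          gcongr
          rw [hπA]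
      _ = (μ.bind (fun z => P z)) A := hbind.symm

/-- Total variation contraction from a uniform minorization: if `P(x, ·) ≥ ε π` for a
`P`-invariant probability `π`, then `‖Pᵏ(x,·) − π‖_TV ≤ (1 − ε)ᵏ`. -/
theorem tv_contraction_from_minorization
    {X : Type*} [MeasurableSpace X] (P : Kernel X X) [IsMarkovKernel P]
    (π : Measure X) [IsProbabilityMeasure π]
    (ε : ℝ) (hε0 : 0 < ε) (hε1 : ε ≤ 1)
    (hminor : ∀ x A, MeasurableSet A → ENNReal.ofReal ε * π A ≤ P x A)
    (hinv : π.bind (fun x => P x) = π)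
    (x : X) (k : ℕ) (A : Set X) (hA : MeasurableSet A) :
    |(((fun μ : Measure X => μ.bind (fun z => P z))^[k] (Measure.dirac x)) A).toReal
      - (π A).toReal| ≤ (1 - ε) ^ k := by
  set μ := ((fun μ : Measure X => μ.bind (fun z => P z))^[k] (Measure.dirac x)) with hμ
  have hprob : IsProbabilityMeasure μ := tv_aux_prob P x k
  set t : ℝ := (1 - ε) ^ k with htdef
  have ht0 : (0:ℝ) ≤ t := pow_nonneg (by linarith) k
  have ht1 : t ≤ 1 := pow_le_one₀ (by linarith) (by linarith)
  have key : ∀ B : Set X, MeasurableSet B →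
      (1 - t) * (π B).toReal ≤ (μ B).toReal := by
    intro B hB
    have h := tv_aux_dom P π ε hε0 hε1 hminor hinv x k B hB
    have h' := ENNReal.toReal_mono (measure_ne_top μ B) h
    rwa [ENNReal.toReal_mul, ENNReal.toReal_ofReal (by linarith)] at h'
  have h1 := key A hA
  have h2 := key Aᶜ hA.compl
  have ha1 : μ A ≤ 1 := prob_le_one
  have hb1 : π A ≤ 1 := prob_le_one
  have hμc : (μ Aᶜ).toReal = 1 - (μ A).toReal := by
    rw [prob_compl_eq_one_sub hA, ENNReal.toReal_sub_of_le ha1 ENNReal.one_ne_top,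
      ENNReal.toReal_one]
  have hπc : (π Aᶜ).toReal = 1 - (π A).toReal := by
    rw [prob_compl_eq_one_sub hA, ENNReal.toReal_sub_of_le hb1 ENNReal.one_ne_top,
      ENNReal.toReal_one]
  rw [hμc, hπc] at h2
  have ha0 : 0 ≤ (μ A).toReal := ENNReal.toReal_nonneg
  have hb0 : 0 ≤ (π A).toReal := ENNReal.toReal_nonneg
  have ha1' : (μ A).toReal ≤ 1 := by
    simpa using ENNReal.toReal_mono ENNReal.one_ne_top ha1
  have hb1' : (π A).toReal ≤ 1 := by
    simpa using ENNReal.toReal_mono ENNReal.one_ne_top hb1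
  rw [abs_le]
  constructor <;> nlinarith
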